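/- Consider rooted trees whose internal nodes are labeled either 'v-type' or 'w-type', each internal node having 1 or 3 children, subject to: (i) if a v-type node has 3 children and two of them are leaves, the remaining child subtree's root is w-type; (ii) every w-type node with 1 child has a w-type child; (iii) every v-type node with 1 child has a leaf as child; (iv) all leaves have v-type parents lines. Then |V_v^3(θ)| ≤ 2|V_w^3(θ)| + 2|V_v^1(θ)|, where V_c^s(θ) denotes the set of internal nodes of type c with s children. -/
import Mathlib


inductive NType1 where
  | v | w
deriving DecidableEq

/-- Rooted trees whose internal nodes carry a label in {v,w}. -/
inductive LTree1 where
  | leaf : LTree1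
  | node : NType1 → (n : ℕ) → (Fin n → LTree1) → LTree1

namespace LTree1

def isLeaf : LTree1 → Prop
  | .leaf => True
  | .node _ _ _ => False

/-- The root of the subtree is an internal node of w-type. -/
def rootW : LTree1 → Prop
  | .leaf => False
  | .node c _ _ => c = .w

/-- Number of internal nodes of type `c` with exactly `s` children. -/
def cnt (c : NType1) (s : ℕ) : LTree1 → ℕ
  | .leaf => 0
  | .node c' n f => (if c' = c ∧ n = s then 1 else 0) + ∑ i : Fin n, cnt c s (f i)

/-- The well-formedness constraints (i)–(iv) together with branching numbers in {1,3}. -/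
def good : LTree1 → Prop
  | .leaf => True
  | .node c n f =>
      (n = 1 ∨ n = 3) ∧ (∀ i : Fin n, good (f i)) ∧
      -- (i) v-type with 3 children, two of which are leaves: the remaining child is w-rooted
      (c = .v → n = 3 →
        ∀ i j k : Fin n, i ≠ j → j ≠ k → i ≠ k →
          isLeaf (f i) → isLeaf (f j) → rootW (f k)) ∧
      -- (ii) w-type with one child: the child is w-rooted
      (c = .w → n = 1 → ∀ i : Fin n, rootW (f i)) ∧
      -- (iii) v-type with one child: the child is a leaf
      (c = .v → n = 1 → ∀ i : Fin n, isLeaf (f i)) ∧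
      -- (iv) leaves have v-type parents: w-type nodes have no leaf children
      (c = .w → ∀ i : Fin n, ¬ isLeaf (f i))

end LTree1


namespace LTree1

def extra : LTree1 → ℕ
  | .leaf => 0
  | .node c n _ => if c = .w then 2 else if n = 3 then 1 else 2

lemma extra_of_rootW (t : LTree1) (h : rootW t) : extra t = 2 := by
  cases t with
  | leaf => simp [rootW] at h
  | node c n f => simp [rootW] at h; simp [extra, h]

lemma one_le_extra (t : LTree1) (h : ¬ isLeaf t) : 1 ≤ extra t := by
  cases t with
  | leaf => simp [isLeaf] at h
  | node c n f => simp only [extra]; split_ifs <;> omega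

lemma key (t : LTree1) (h : good t) :
    cnt .v 3 t + extra t ≤ 2 * cnt .w 3 t + 2 * cnt .v 1 t := by
  induction t with
  | leaf => simp [cnt, extra]
  | node c n f ih =>
    obtain ⟨hn, hg, hi, hii, hiii, hiv⟩ := h
    have hb : ∀ i, cnt .v 3 (f i) + extra (f i)
        ≤ 2 * cnt .w 3 (f i) + 2 * cnt .v 1 (f i) := fun i => ih i (hg i)
    rcases hn with rfl | rfl
    · -- n = 1
      cases c with
      | v =>
        have hb0 := hb 0
        simp [cnt, extra, Fin.sum_univ_one] at *
        omega
      | w =>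
        have hw : rootW (f 0) := hii rfl rfl 0
        have he := extra_of_rootW _ hw
        have hb0 := hb 0
        simp [cnt, extra, Fin.sum_univ_one] at *
        omega
    · -- n = 3
      cases c with
      | v =>
        have h2 : 2 ≤ extra (f 0) + extra (f 1) + extra (f 2) := by
          by_cases l0 : isLeaf (f 0) <;> by_cases l1 : isLeaf (f 1) <;>
            by_cases l2 : isLeaf (f 2)
          · have := extra_of_rootW _ (hi rfl rfl 0 1 2 (by decide) (by decide) (by decide) l0 l1)
            omega
          · have := extra_of_rootW _ (hi rfl rfl 0 1 2 (by decide) (by decide) (by decide) l0 l1)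
            omega
          · have := extra_of_rootW _ (hi rfl rfl 0 2 1 (by decide) (by decide) (by decide) l0 l2)
            omega
          · have := one_le_extra _ l1
            have := one_le_extra _ l2
            omega
          · have := extra_of_rootW _ (hi rfl rfl 1 2 0 (by decide) (by decide) (by decide) l1 l2)
            omega
          · have := one_le_extra _ l0
            have := one_le_extra _ l2
            omega
          · have := one_le_extra _ l0
            have := one_le_extra _ l1
            omega
          · have := one_le_extra _ l0
            have := one_le_extra _ l1
            omega
        have hb0 := hb 0
        have hb1 := hb 1
        have hb2 := hb 2
        simp [cnt, extra, Fin.sum_univ_three] at *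
        omega
      | w =>
        have hb0 := hb 0
        have hb1 := hb 1
        have hb2 := hb 2
        simp [cnt, extra, Fin.sum_univ_three] at *
        omega

end LTree1

theorem v3_count_bound (t : LTree1) (h : LTree1.good t) :
    LTree1.cnt .v 3 t ≤ 2 * LTree1.cnt .w 3 t + 2 * LTree1.cnt .v 1 t := by
  have := LTree1.key t h
  omega
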